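/- Let K be a commutative ring, M a finitely presented K-module with symmetric bilinear form ⟨-,-⟩, and R = {(x,y) ∈ End_K(M)^op × End_K(M) | ⟨xm, m'⟩ = ⟨m, ym'⟩ for all m, m' ∈ M}. Then R is a K-subalgebra of End_K(M)^op × End_K(M), and R is locally finite. -/

import Mathlib

/-- A `K`-algebra is locally finite if every finite subset is contained in a subalgebra
which is finitely generated as a `K`-module. -/
def IsLocallyFiniteAlgebra (K A : Type*) [CommRing K] [Ring A] [Algebra K A] : Prop :=
  ∀ s : Finset A, ∃ S : Subalgebra K A, (↑s : Set A) ⊆ (S : Set A) ∧ Module.Finite K S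

/-- The subalgebra `R = {(xᵒᵖ, y) ∈ End_K(M)ᵒᵖ × End_K(M) | ⟨xm, m'⟩ = ⟨m, ym'⟩}` of pairs
of endomorphisms adjoint with respect to a bilinear form `B`. -/
def adjointPairSubalgebra {K M : Type*} [CommRing K] [AddCommGroup M] [Module K M]
    (B : M →ₗ[K] M →ₗ[K] K) :
    Subalgebra K ((Module.End K M)ᵐᵒᵖ × Module.End K M) where
  carrier := {p | ∀ m m' : M, B (p.1.unop m) m' = B m (p.2 m')}
  add_mem' := by
    intro p q hp hq m m'
    simp only [Prod.fst_add, Prod.snd_add, MulOpposite.unop_add, LinearMap.add_apply,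
      map_add, LinearMap.add_apply] at *
    rw [hp, hq]
  mul_mem' := by
    intro p q hp hq m m'
    simp only [Prod.fst_mul, Prod.snd_mul, MulOpposite.unop_mul, Module.End.mul_apply] at *
    rw [hq, hp]
  algebraMap_mem' := by
    intro r m m'
    simp [Algebra.algebraMap_eq_smul_one, map_smul, LinearMap.smul_apply]
  
set_option maxHeartbeats 1600000
set_option synthInstance.maxHeartbeats 400000

/-- For a finitely presented `K`-module `M` with a symmetric bilinear form `B`, the algebra
`R` of adjoint pairs is a `K`-subalgebra of `End_K(M)ᵒᵖ × End_K(M)` (by construction above)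
and it is locally finite. -/
theorem adjointPairSubalgebra_locallyFinite
    {K M : Type*} [CommRing K] [AddCommGroup M] [Module K M]
    [Module.FinitePresentation K M]
    (B : M →ₗ[K] M →ₗ[K] K) (hB : ∀ m m' : M, B m m' = B m' m) :
    IsLocallyFiniteAlgebra K (adjointPairSubalgebra B) := by
  classical
  set R : Subalgebra K ((Module.End K M)ᵐᵒᵖ × Module.End K M) := adjointPairSubalgebra B with hRdef
  intro s
  set W := (Module.End K M)ᵐᵒᵖ × Module.End K M with hWdef
  -- a finite generating family of `M`
  obtain ⟨k, u, hu⟩ := Module.Finite.exists_fin (R := K) (M := M)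
  -- coefficients expressing `f (u i)` in terms of the generators
  have hcoef : ∀ (f : Module.End K M) (i : Fin k), ∃ cc : Fin k → K,
      (∑ j, cc j • u j) = f (u i) := by
    intro f i
    have hmem : f (u i) ∈ Submodule.span K (Set.range u) := by rw [hu]; trivial
    exact (Submodule.mem_span_range_iff_exists_fun K).mp hmem
  choose c hc using hcoef
  -- the image of `s` in the big algebra
  set t : Finset W := s.image Subtype.val with htdef
  -- the finite set of endomorphisms occurring in `s`
  set E : Finset (Module.End K M) :=
    t.image (fun p => p.1.unop) ∪ t.image (fun p => p.2) with hEdef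
  -- all coefficients needed
  set T : Finset K :=
    E.biUnion (fun f => Finset.univ.biUnion
      (fun i : Fin k => Finset.univ.image (fun j : Fin k => c f i j))) with hTdef
  set K₀ : Subalgebra ℤ K := Algebra.adjoin ℤ (T : Set K) with hK₀def
  have hmemT : ∀ f ∈ E, ∀ i j : Fin k, c f i j ∈ K₀ := by
    intro f hf i j
    apply Algebra.subset_adjoin
    simp only [Finset.coe_biUnion, Set.mem_iUnion, Finset.mem_coe, hTdef]
    exact ⟨f, hf, i, Finset.mem_univ i, Finset.mem_image.mpr ⟨j, Finset.mem_univ j, rfl⟩⟩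
  -- `K₀` is a Noetherian ring
  haveI hNoeth : IsNoetherianRing K₀ := by
    haveI : Algebra.FiniteType ℤ K₀ :=
      (Subalgebra.fg_iff_finiteType _).mp (Subalgebra.fg_adjoin_finset T)
    exact Algebra.FiniteType.isNoetherianRing ℤ _
  -- the `K₀`-lattice spanned by the generators
  set M₀ : Submodule K₀ M := Submodule.span K₀ (Set.range u) with hM₀def
  haveI hM₀noeth : IsNoetherian K₀ M₀ :=
    isNoetherian_of_fg_of_noetherian _ (Submodule.fg_span (Set.finite_range u))
  have hsmul : ∀ (a : K), a ∈ K₀ → ∀ x ∈ M₀, a • x ∈ M₀ := by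
    intro a ha x hx
    exact M₀.smul_mem ⟨a, ha⟩ hx
  have huM₀ : ∀ i, u i ∈ M₀ := fun i => Submodule.subset_span ⟨i, rfl⟩
  -- endomorphisms from `E` preserve `M₀`
  have hE : ∀ f ∈ E, ∀ x ∈ M₀, f x ∈ M₀ := by
    intro f hf x hx
    induction hx using Submodule.span_induction with
    | mem y hy =>
      obtain ⟨i, rfl⟩ := hy
      rw [← hc f i]
      exact Submodule.sum_mem _ fun j _ => hsmul _ (hmemT f hf i j) _ (huM₀ j)
    | zero => simpa using M₀.zero_mem
    | add y z _ _ hy hz => rw [map_add]; exact M₀.add_mem hy hz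
    | smul a y _ hy =>
      have h : f (a • y) = a • f y := by
        show f ((a : K) • y) = (a : K) • f y
        rw [map_smul]
      rw [h]
      exact M₀.smul_mem a hy
  -- the `K₀`-subalgebra generated by `s`
  set A₀ : Subalgebra K₀ W := Algebra.adjoin K₀ (t : Set W) with hA₀def
  -- every element of `A₀` preserves `M₀` componentwise
  have hA₀ : ∀ w ∈ A₀, (∀ x ∈ M₀, w.1.unop x ∈ M₀) ∧ (∀ x ∈ M₀, w.2 x ∈ M₀) := by
    intro w hw
    induction hw using Algebra.adjoin_induction with
    | mem w hw =>
      have hw' : w ∈ t := hw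
      constructor
      · intro x hx
        exact hE _ (Finset.mem_union_left _ (Finset.mem_image_of_mem _ hw')) x hx
      · intro x hx
        exact hE _ (Finset.mem_union_right _ (Finset.mem_image_of_mem _ hw')) x hx
    | algebraMap a =>
      constructor <;> intro x hx
      · have h : (algebraMap K₀ W a).1.unop x = (a : K) • x := rfl
        rw [h]; exact hsmul _ a.2 x hx
      · have h : (algebraMap K₀ W a).2 x = (a : K) • x := rfl
        rw [h]; exact hsmul _ a.2 x hx
    | add w₁ w₂ _ _ h₁ h₂ =>
      constructor <;> intro x hx
      · have h : (w₁ + w₂).1.unop x = w₁.1.unop x + w₂.1.unop x := rfl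
        rw [h]; exact M₀.add_mem (h₁.1 x hx) (h₂.1 x hx)
      · have h : (w₁ + w₂).2 x = w₁.2 x + w₂.2 x := rfl
        rw [h]; exact M₀.add_mem (h₁.2 x hx) (h₂.2 x hx)
    | mul w₁ w₂ _ _ h₁ h₂ =>
      constructor <;> intro x hx
      · have h : (w₁ * w₂).1.unop x = w₂.1.unop (w₁.1.unop x) := rfl
        rw [h]; exact h₂.1 _ (h₁.1 x hx)
      · have h : (w₁ * w₂).2 x = w₁.2 (w₂.2 x) := rfl
        rw [h]; exact h₁.2 _ (h₂.2 x hx)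
  -- every element of `A₀` lies in `R`
  have hA₀R : (A₀ : Set W) ⊆ (R : Set W) := by
    intro w hw
    induction hw using Algebra.adjoin_induction with
    | mem w hw =>
      have hw' : w ∈ t := hw
      obtain ⟨r, _, rfl⟩ := Finset.mem_image.mp hw'
      exact r.property
    | algebraMap a =>
      have h1 : (algebraMap K₀ W a) = algebraMap K W (a : K) := rfl
      rw [h1]; exact R.algebraMap_mem _
    | add w₁ w₂ _ _ h₁ h₂ => exact R.add_mem h₁ h₂
    | mul w₁ w₂ _ _ h₁ h₂ => exact R.mul_mem h₁ h₂
  -- the submodule of pairs preserving the lattice on generators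
  set P : Submodule K₀ W :=
    { carrier := {w : W | (∀ i, w.1.unop (u i) ∈ M₀) ∧ (∀ i, w.2 (u i) ∈ M₀)}
      add_mem' := by
        rintro a b ⟨ha1, ha2⟩ ⟨hb1, hb2⟩
        constructor <;> intro i
        · have h : (a + b).1.unop (u i) = a.1.unop (u i) + b.1.unop (u i) := rfl
          rw [h]; exact M₀.add_mem (ha1 i) (hb1 i)
        · have h : (a + b).2 (u i) = a.2 (u i) + b.2 (u i) := rfl
          rw [h]; exact M₀.add_mem (ha2 i) (hb2 i)
      zero_mem' := by
        constructor <;> intro i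
        · have h : (0 : W).1.unop (u i) = 0 := rfl
          rw [h]; exact M₀.zero_mem
        · have h : (0 : W).2 (u i) = 0 := rfl
          rw [h]; exact M₀.zero_mem
      smul_mem' := by
        rintro a w ⟨hw1, hw2⟩
        constructor <;> intro i
        · have h : (a • w).1.unop (u i) = (a : K) • (w.1.unop (u i)) := rfl
          rw [h]; exact hsmul _ a.2 _ (hw1 i)
        · have h : (a • w).2 (u i) = (a : K) • (w.2 (u i)) := rfl
          rw [h]; exact hsmul _ a.2 _ (hw2 i) } with hPdef
  -- `P` is a Noetherian `K₀`-module
  haveI hPnoeth : IsNoetherian K₀ P := by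
    let Phi : P →ₗ[K₀] (Fin k → M₀) × (Fin k → M₀) :=
      { toFun := fun w =>
          (fun i => ⟨(w : W).1.unop (u i), w.2.1 i⟩, fun i => ⟨(w : W).2 (u i), w.2.2 i⟩)
        map_add' := by
          intro a b
          refine Prod.ext ?_ ?_ <;> funext i <;> apply Subtype.ext <;> rfl
        map_smul' := by
          intro a w
          refine Prod.ext ?_ ?_ <;> funext i <;> apply Subtype.ext <;> rfl }
    refine isNoetherian_of_injective Phi ?_
    intro x y hxy
    have h1 : ∀ i, (x : W).1.unop (u i) = (y : W).1.unop (u i) := by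
      intro i
      exact congrArg Subtype.val (congrFun (congrArg Prod.fst hxy) i)
    have h2 : ∀ i, (x : W).2 (u i) = (y : W).2 (u i) := by
      intro i
      exact congrArg Subtype.val (congrFun (congrArg Prod.snd hxy) i)
    apply Subtype.ext
    refine Prod.ext ?_ ?_
    · apply MulOpposite.unop_injective
      apply LinearMap.ext_on hu
      rintro z ⟨i, rfl⟩
      exact h1 i
    · apply LinearMap.ext_on hu
      rintro z ⟨i, rfl⟩
      exact h2 i
  -- `A₀` is contained in `P`, hence finitely generated as a `K₀`-module
  have hA₀le : Subalgebra.toSubmodule A₀ ≤ P := by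
    intro w hw
    exact ⟨fun i => (hA₀ w hw).1 (u i) (huM₀ i), fun i => (hA₀ w hw).2 (u i) (huM₀ i)⟩
  have hfg : (Subalgebra.toSubmodule A₀).FG := by
    have h1 : (Submodule.comap P.subtype (Subalgebra.toSubmodule A₀)).FG :=
      IsNoetherian.noetherian _
    have h2 := h1.map P.subtype
    rwa [Submodule.map_comap_subtype, inf_of_le_right hA₀le] at h2
  obtain ⟨g, hg⟩ := hfg
  have hgA₀ : (↑g : Set W) ⊆ (A₀ : Set W) := by
    intro x hx
    have hx' : x ∈ Submodule.span K₀ (↑g : Set W) := Submodule.subset_span hx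
    rw [hg] at hx'
    exact hx'
  -- the K-span of `g`
  set N : Submodule K W := Submodule.span K (↑g : Set W) with hNdef
  have hA₀N : (A₀ : Set W) ⊆ (N : Set W) := by
    intro x hx
    have hx' : x ∈ Submodule.span K₀ (↑g : Set W) := by rw [hg]; exact hx
    exact Submodule.span_le_restrictScalars K₀ K (↑g : Set W) hx'
  have hNR : N ≤ Subalgebra.toSubmodule R := by
    rw [hNdef]
    refine Submodule.span_le.mpr fun z hz => hA₀R (hgA₀ hz)
  have hone : (1 : W) ∈ N := hA₀N A₀.one_mem
  have hmul : ∀ x y : W, x ∈ N → y ∈ N → x * y ∈ N := by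
    have hNN : N * N ≤ N := by
      rw [hNdef, Submodule.span_mul_span]
      refine Submodule.span_le.mpr ?_
      rintro z hz
      rw [Set.mem_mul] at hz
      obtain ⟨x, hx, y, hy, rfl⟩ := hz
      exact hA₀N (A₀.mul_mem (hgA₀ hx) (hgA₀ hy))
    intro x y hx hy
    exact hNN (Submodule.mul_mem_mul hx hy)
  refine ⟨Subalgebra.comap R.val (N.toSubalgebra hone hmul), ?_, ?_⟩
  · intro x hx
    rw [SetLike.mem_coe, Subalgebra.mem_comap]
    show (x : W) ∈ N.toSubalgebra hone hmul
    rw [Submodule.mem_toSubalgebra]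
    exact hA₀N (Algebra.subset_adjoin (Finset.mem_coe.mpr (Finset.mem_image_of_mem _ hx)))
  · haveI hNfin : Module.Finite K N :=
      Module.Finite.iff_fg.mpr (Submodule.fg_span g.finite_toSet)
    have hmemS : ∀ x : N,
        (⟨(x : W), hNR x.2⟩ : R) ∈ Subalgebra.comap R.val (N.toSubalgebra hone hmul) := by
      intro x
      rw [Subalgebra.mem_comap]
      show (x : W) ∈ N.toSubalgebra hone hmul
      rw [Submodule.mem_toSubalgebra]
      exact x.2
    let phi : N →ₗ[K] (Subalgebra.comap R.val (N.toSubalgebra hone hmul)) :=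
      { toFun := fun x => ⟨⟨(x : W), hNR x.2⟩, hmemS x⟩
        map_add' := by intro a b; apply Subtype.ext; apply Subtype.ext; rfl
        map_smul' := by intro a x; apply Subtype.ext; apply Subtype.ext; rfl }
    have hphi : Function.Surjective phi := by
      intro y
      have hy : ((y : R) : W) ∈ N := by
        have := y.2
        rw [Subalgebra.mem_comap] at this
        exact this
      exact ⟨⟨((y : R) : W), hy⟩, by apply Subtype.ext; apply Subtype.ext; rfl⟩
    exact Module.Finite.of_surjective phi hphi
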